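/- arXiv:1512.09339 — 4 statements merged into one kernel-verified Lean document; each statement's English description precedes it below -/
import Mathlib

section
/- A structural matrix algebra M(B,k) is a Frobenius algebra if and only if B = (I_1 × I_1) ∪ … ∪ (I_r × I_r) for some partition I_1,…,I_r of {1,…,n}; equivalently, if and only if the preorder B is symmetric. -/
/-- The structural matrix algebra `M(B, k)` associated to a reflexive transitive relation `B`
on `{1, …, n}`: the subalgebra of `Mₙ(k)` of matrices whose `(i,j)`-entry is zero
whenever `(i,j) ∉ B`. -/
def structuralMatrixAlgebra (k : Type*) [Field k] {n : ℕ} (B : Fin n → Fin n → Prop)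
    (hrefl : ∀ i, B i i) (htrans : ∀ i j l, B i j → B j l → B i l) :
    Subalgebra k (Matrix (Fin n) (Fin n) k) where
  carrier := {A | ∀ i j, ¬ B i j → A i j = 0}
  mul_mem' := by
    classical
    intro A C hA hC i j hij
    simp only [Set.mem_setOf_eq] at hA hC
    rw [Matrix.mul_apply]
    refine Finset.sum_eq_zero fun l _ => ?_
    by_cases h : B i l
    · rw [hC l j fun h' => hij (htrans i l j h h'), mul_zero]
    · rw [hA i l h, zero_mul]
  one_mem' := by
    intro i j hij
    have : i ≠ j := fun h => hij (h ▸ hrefl i)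
    simp [Matrix.one_apply, this]
  add_mem' := by
    intro A C hA hC i j hij
    simp only [Set.mem_setOf_eq] at hA hC
    simp [Matrix.add_apply, hA i j hij, hC i j hij]
  zero_mem' := by intro i j _; simp
  algebraMap_mem' := by
    intro c i j hij
    have : i ≠ j := fun h => hij (h ▸ hrefl i)
    simp [Matrix.algebraMap_matrix_apply, this]

/-- A finite dimensional `k`-algebra is Frobenius if there is a linear functional `l` whose
associated bilinear form `(a, b) ↦ l (a * b)` is nondegenerate. -/
def IsFrobeniusAlgebra (k A : Type*) [Field k] [Ring A] [Algebra k A] : Prop :=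
  ∃ l : A →ₗ[k] k,
    (∀ a : A, (∀ b : A, l (a * b) = 0) → a = 0) ∧
    (∀ b : A, (∀ a : A, l (a * b) = 0) → b = 0)


set_option synthInstance.maxHeartbeats 1000000
set_option maxHeartbeats 2000000

section Aux

open Matrix

variable {k : Type*} [Field k] {n : ℕ} {B : Fin n → Fin n → Prop}
variable (hrefl : ∀ i, B i i) (htrans : ∀ i j l, B i j → B j l → B i l)

lemma mem_sma {A : Matrix (Fin n) (Fin n) k} :
    A ∈ structuralMatrixAlgebra k B hrefl htrans ↔ ∀ i j, ¬ B i j → A i j = 0 :=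
  Iff.rfl

lemma std_mem {p q : Fin n} (h : B p q) :
    Matrix.single p q (1 : k) ∈ structuralMatrixAlgebra k B hrefl htrans := by
  rw [mem_sma]
  intro i j hij
  by_cases hp : p = i ∧ q = j
  · exact absurd (hp.1 ▸ hp.2 ▸ h) hij
  · exact Matrix.single_apply_of_ne _ _ _ _ _ hp

lemma trace_mul_std (X : Matrix (Fin n) (Fin n) k) (i j : Fin n) :
    Matrix.trace (X * Matrix.single j i (1 : k)) = X i j := by
  classical
  rw [Matrix.trace]
  rw [Finset.sum_eq_single i]
  · simp [Matrix.diag]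
  · intro m _ hm
    simp [Matrix.diag, hm]
  · simp

lemma trace_std_mul (X : Matrix (Fin n) (Fin n) k) (i j : Fin n) :
    Matrix.trace (Matrix.single j i (1 : k) * X) = X i j := by
  classical
  rw [Matrix.trace]
  rw [Finset.sum_eq_single j]
  · simp [Matrix.diag]
  · intro m _ hm
    simp [Matrix.diag, hm]
  · simp

lemma frob_of_symm (hsymm : ∀ i j, B i j → B j i) :
    IsFrobeniusAlgebra k (structuralMatrixAlgebra k B hrefl htrans) := by
  classical
  set S := structuralMatrixAlgebra k B hrefl htrans with hS
  refine ⟨(Matrix.traceLinearMap (Fin n) k k).comp S.val.toLinearMap, ?_, ?_⟩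
  · intro x hx
    apply Subtype.ext
    funext i j
    show (x : Matrix (Fin n) (Fin n) k) i j = 0
    by_cases hij : B i j
    · have := hx ⟨Matrix.single j i 1, std_mem hrefl htrans (hsymm i j hij)⟩
      simpa [trace_mul_std] using this
    · exact x.2 i j hij
  · intro x hx
    apply Subtype.ext
    funext i j
    show (x : Matrix (Fin n) (Fin n) k) i j = 0
    by_cases hij : B i j
    · have := hx ⟨Matrix.single j i 1, std_mem hrefl htrans (hsymm i j hij)⟩
      simpa [trace_std_mul] using this
    · exact x.2 i j hij

lemma symm_of_frob
    (hfr : IsFrobeniusAlgebra k (structuralMatrixAlgebra k B hrefl htrans)) :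
    ∀ a b, B a b → B b a := by
  classical
  obtain ⟨l, hl, _⟩ := hfr
  -- truncation to the subalgebra, as a linear map
  let T : Matrix (Fin n) (Fin n) k →ₗ[k] (structuralMatrixAlgebra k B hrefl htrans) :=
    { toFun := fun M => ⟨fun p q => if B p q then M p q else 0,
        (mem_sma hrefl htrans).2 (fun p q h => if_neg h)⟩
      map_add' := by
        intro M N; apply Subtype.ext; funext p q
        show (if B p q then (M + N) p q else 0)
          = (if B p q then M p q else 0) + (if B p q then N p q else 0)
        by_cases h : B p q <;> simp [h]
      map_smul' := by
        intro a M; apply Subtype.ext; funext p q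
        show (if B p q then (a • M) p q else 0) = a * (if B p q then M p q else 0)
        by_cases h : B p q <;> simp [h] }
  set Λ : Matrix (Fin n) (Fin n) k →ₗ[k] k := l.comp T with hΛ
  have hT : ∀ x : structuralMatrixAlgebra k B hrefl htrans,
      T (x : Matrix (Fin n) (Fin n) k) = x := by
    intro x; apply Subtype.ext; funext p q
    show (if B p q then (x : Matrix (Fin n) (Fin n) k) p q else 0)
      = (x : Matrix (Fin n) (Fin n) k) p q
    by_cases h : B p q
    · rw [if_pos h]
    · rw [if_neg h, x.2 p q h]
  have key : ∀ x y : structuralMatrixAlgebra k B hrefl htrans,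
      l (x * y) = Λ ((x : Matrix (Fin n) (Fin n) k) * (y : Matrix (Fin n) (Fin n) k)) := by
    intro x y
    have h1 : ((x * y : structuralMatrixAlgebra k B hrefl htrans) : Matrix (Fin n) (Fin n) k)
        = (x : Matrix (Fin n) (Fin n) k) * (y : Matrix (Fin n) (Fin n) k) := rfl
    rw [hΛ, LinearMap.comp_apply, ← h1, hT]
  set c : Fin n → Fin n → k := fun p q => Λ (Matrix.single p q 1) with hc
  have hexp : ∀ M : Matrix (Fin n) (Fin n) k, Λ M = ∑ p, ∑ q, M p q * c p q := by
    intro M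
    conv_lhs => rw [Matrix.matrix_eq_sum_single M]
    rw [map_sum]
    refine Finset.sum_congr rfl fun p _ => ?_
    rw [map_sum]
    refine Finset.sum_congr rfl fun q _ => ?_
    have h2 : Matrix.single p q (M p q) = M p q • Matrix.single p q (1 : k) := by
      rw [Matrix.smul_single, smul_eq_mul, mul_one]
    rw [h2, LinearMap.map_smul, smul_eq_mul, hc]
  -- cardinality inequality
  have hcard : ∀ j : Fin n,
      (Finset.univ.filter (fun i => B i j)).card
        ≤ (Finset.univ.filter (fun q => B j q)).card := by
    intro j
    let Φ : ({i : Fin n // B i j} → k) →ₗ[k] ({q : Fin n // B j q} → k) :=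
      { toFun := fun v q => ∑ i : {i : Fin n // B i j}, v i * c i.1 q.1
        map_add' := by
          intro v w; funext q
          show (∑ i : {i : Fin n // B i j}, (v i + w i) * c i.1 q.1) = _
          simp [add_mul, Finset.sum_add_distrib]
        map_smul' := by
          intro a v; funext q
          show (∑ i : {i : Fin n // B i j}, (a * v i) * c i.1 q.1) = _
          simp [Finset.mul_sum, mul_assoc] }
    have hΦ : Function.Injective Φ := by
      rw [injective_iff_map_eq_zero]
      intro v hv
      set v' : Fin n → k := fun p => if h : B p j then v ⟨p, h⟩ else 0 with hv'
      set X : Matrix (Fin n) (Fin n) k := Matrix.of (fun p q => if q = j then v' p else 0)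
        with hX
      have hXmem : X ∈ structuralMatrixAlgebra k B hrefl htrans := by
        rw [mem_sma]
        intro p q hpq
        show (if q = j then v' p else 0) = 0
        by_cases h : q = j
        · subst h
          rw [if_pos rfl]
          simp only [hv']
          exact dif_neg hpq
        · exact if_neg h
      have hzero : ∀ y : structuralMatrixAlgebra k B hrefl htrans, l (⟨X, hXmem⟩ * y) = 0 := by
        intro y
        rw [key, hexp]
        have hXY : ∀ p q, ((X * (y : Matrix (Fin n) (Fin n) k)) p q)
            = v' p * (y : Matrix (Fin n) (Fin n) k) j q := by
          intro p q
          rw [Matrix.mul_apply]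
          have : ∀ m : Fin n, X p m * (y : Matrix (Fin n) (Fin n) k) m q
              = if m = j then v' p * (y : Matrix (Fin n) (Fin n) k) j q else 0 := by
            intro m
            show (if m = j then v' p else 0) * _ = _
            by_cases h : m = j
            · subst h; simp
            · simp [h]
          rw [Finset.sum_congr rfl fun m _ => this m, Finset.sum_ite_eq' Finset.univ j]
          simp
        rw [Finset.sum_comm]
        refine Finset.sum_eq_zero fun q _ => ?_
        have e2 : ∀ p, (X * (y : Matrix (Fin n) (Fin n) k)) p q * c p q
            = (y : Matrix (Fin n) (Fin n) k) j q * (v' p * c p q) := by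
          intro p; rw [hXY]; ring
        rw [Finset.sum_congr rfl fun p _ => e2 p, ← Finset.mul_sum]
        by_cases hq : B j q
        · have e1 : ∑ p : Fin n, v' p * c p q = ∑ i : {i : Fin n // B i j}, v i * c i.1 q := by
            rw [← Finset.sum_filter_of_ne (s := Finset.univ) (p := fun p => B p j)
              (f := fun p => v' p * c p q) ?_]
            · refine (Finset.sum_subtype (p := fun p => B p j) (F := inferInstance) (Finset.univ.filter (fun p => B p j))
                (fun x => by simp) (fun p => v' p * c p q)).trans ?_
              refine Finset.sum_congr rfl fun i _ => ?_
              simp only [hv']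
              rw [dif_pos i.2]
            · intro x _ hx
              by_contra h
              apply hx
              simp only [hv']
              rw [dif_neg h, zero_mul]
          have h0 : Φ v ⟨q, hq⟩ = 0 := by rw [hv]; rfl
          rw [e1, show (∑ i : {i : Fin n // B i j}, v i * c i.1 q) = Φ v ⟨q, hq⟩ from rfl, h0,
            mul_zero]
        · rw [y.2 j q hq, zero_mul]
      have hX0 : (⟨X, hXmem⟩ : structuralMatrixAlgebra k B hrefl htrans) = 0 :=
        hl _ hzero
      funext i
      have h3 : X = 0 := by
        have h4 := congrArg Subtype.val hX0
        simpa using h4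
      have h5 : X i.1 j = 0 := by rw [h3]; simp
      have h6 : X i.1 j = v i := by
        show (if j = j then v' i.1 else 0) = v i
        rw [if_pos rfl]
        simp only [hv']
        rw [dif_pos i.2]
      show v i = 0
      rw [← h6, h5]
    have hfin := LinearMap.finrank_le_finrank_of_injective hΦ
    rw [Module.finrank_pi, Module.finrank_pi] at hfin
    rwa [Fintype.card_subtype, Fintype.card_subtype] at hfin
  -- order-theoretic conclusion
  intro a b hab
  by_contra hba
  obtain ⟨m, hm, hmin⟩ := Finset.exists_min_image
    (Finset.univ.filter (fun q => B b q))
    (fun q => (Finset.univ.filter (fun z => B q z)).card)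
    ⟨b, by simp [hrefl]⟩
  have hbm : B b m := by simpa using hm
  have hmax : ∀ z, B m z → B z m := by
    intro z hz
    by_contra hzm
    have hsub : Finset.univ.filter (fun w => B z w) ⊂ Finset.univ.filter (fun w => B m w) := by
      constructor
      · intro w hw
        simp only [Finset.mem_filter, Finset.mem_univ, true_and] at hw ⊢
        exact htrans _ _ _ hz hw
      · intro hcon
        have : m ∈ Finset.univ.filter (fun w => B z w) :=
          hcon (by simp [hrefl])
        simp only [Finset.mem_filter, Finset.mem_univ, true_and] at this
        exact hzm this
    have hlt := Finset.card_lt_card hsub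
    have hzmem : z ∈ Finset.univ.filter (fun q => B b q) := by
      simp only [Finset.mem_filter, Finset.mem_univ, true_and]
      exact htrans _ _ _ hbm hz
    exact absurd (hmin z hzmem) (not_le.2 hlt)
  have hssub : Finset.univ.filter (fun q => B m q) ⊆ Finset.univ.filter (fun i => B i m) := by
    intro q hq
    simp only [Finset.mem_filter, Finset.mem_univ, true_and] at hq ⊢
    exact hmax q hq
  have heq := Finset.eq_of_subset_of_card_le hssub (hcard m)
  have ham : a ∈ Finset.univ.filter (fun i => B i m) := by
    simp only [Finset.mem_filter, Finset.mem_univ, true_and]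
    exact htrans _ _ _ hab hbm
  rw [← heq] at ham
  simp only [Finset.mem_filter, Finset.mem_univ, true_and] at ham
  exact hba (htrans _ _ _ hbm ham)

include hrefl htrans in
lemma part_of_symm (hsymm : ∀ i j, B i j → B j i) :
    ∃ (r : ℕ) (I : Fin r → Finset (Fin n)),
      (∀ s t, s ≠ t → Disjoint (I s) (I t)) ∧ (∀ i, ∃ t, i ∈ I t) ∧
      ∀ i j, B i j ↔ ∃ t, i ∈ I t ∧ j ∈ I t := by
  classical
  refine ⟨n, fun t => if ∀ s, B t s → t ≤ s then Finset.univ.filter (fun j => B t j)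
    else ∅, ?_, ?_, ?_⟩
  · intro s t hst
    dsimp only
    by_cases hs : ∀ u, B s u → s ≤ u
    · by_cases ht : ∀ u, B t u → t ≤ u
      · rw [if_pos hs, if_pos ht, Finset.disjoint_left]
        intro x hxs hxt
        simp only [Finset.mem_filter, Finset.mem_univ, true_and] at hxs hxt
        have hst' : B s t := htrans _ _ _ hxs (hsymm _ _ hxt)
        have hts' : B t s := hsymm _ _ hst'
        exact hst (le_antisymm (hs t hst') (ht s hts'))
      · rw [if_neg ht]; exact Finset.disjoint_empty_right _
    · rw [if_neg hs]; exact Finset.disjoint_empty_left _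
  · intro i
    have hne : (Finset.univ.filter (fun j => B i j)).Nonempty := ⟨i, by simp [hrefl i]⟩
    set m := (Finset.univ.filter (fun j => B i j)).min' hne with hm
    have him : B i m := by
      have := (Finset.univ.filter (fun j => B i j)).min'_mem hne
      simpa using this
    have hmin : ∀ s, B m s → m ≤ s := by
      intro s hms
      apply Finset.min'_le
      simp only [Finset.mem_filter, Finset.mem_univ, true_and]
      exact htrans _ _ _ him hms
    refine ⟨m, ?_⟩
    dsimp only
    rw [if_pos hmin]
    simp only [Finset.mem_filter, Finset.mem_univ, true_and]
    exact hsymm _ _ him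
  · intro i j
    constructor
    · intro hij
      have hne : (Finset.univ.filter (fun l => B i l)).Nonempty := ⟨i, by simp [hrefl i]⟩
      set m := (Finset.univ.filter (fun l => B i l)).min' hne with hm
      have him : B i m := by
        have := (Finset.univ.filter (fun l => B i l)).min'_mem hne
        simpa using this
      have hmin : ∀ s, B m s → m ≤ s := by
        intro s hms
        apply Finset.min'_le
        simp only [Finset.mem_filter, Finset.mem_univ, true_and]
        exact htrans _ _ _ him hms
      refine ⟨m, ?_, ?_⟩
      · dsimp only
        rw [if_pos hmin]
        simp only [Finset.mem_filter, Finset.mem_univ, true_and]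
        exact hsymm _ _ him
      · dsimp only
        rw [if_pos hmin]
        simp only [Finset.mem_filter, Finset.mem_univ, true_and]
        exact htrans _ _ _ (hsymm _ _ him) hij
    · rintro ⟨t, hi, hj⟩
      dsimp only at hi hj
      by_cases ht : ∀ u, B t u → t ≤ u
      · rw [if_pos ht] at hi hj
        simp only [Finset.mem_filter, Finset.mem_univ, true_and] at hi hj
        exact htrans _ _ _ (hsymm _ _ hi) hj
      · rw [if_neg ht] at hi
        exact absurd hi (Finset.notMem_empty _)

end Aux

/-- `M(B, k)` is a Frobenius algebra if and only if
`B = (I₁ × I₁) ∪ … ∪ (I_r × I_r)` for some partition `I₁, …, I_r` of `{1, …, n}`;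
equivalently, if and only if the preorder `B` is symmetric. -/
theorem statement3 (k : Type*) [Field k] {n : ℕ} (B : Fin n → Fin n → Prop)
    (hrefl : ∀ i, B i i) (htrans : ∀ i j l, B i j → B j l → B i l) :
    (IsFrobeniusAlgebra k (structuralMatrixAlgebra k B hrefl htrans) ↔
      ∃ (r : ℕ) (I : Fin r → Finset (Fin n)),
        (∀ s t, s ≠ t → Disjoint (I s) (I t)) ∧ (∀ i, ∃ t, i ∈ I t) ∧
        ∀ i j, B i j ↔ ∃ t, i ∈ I t ∧ j ∈ I t) ∧
    (IsFrobeniusAlgebra k (structuralMatrixAlgebra k B hrefl htrans) ↔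
      ∀ i j, B i j → B j i) := by
  have h2 : IsFrobeniusAlgebra k (structuralMatrixAlgebra k B hrefl htrans) ↔
      ∀ i j, B i j → B j i :=
    ⟨fun h => symm_of_frob hrefl htrans h, fun h => frob_of_symm hrefl htrans h⟩
  refine ⟨?_, h2⟩
  rw [h2]
  constructor
  · exact fun hs => part_of_symm hrefl htrans hs
  · rintro ⟨r, I, _, _, hBI⟩ i j hij
    rw [hBI] at hij ⊢
    obtain ⟨t, hi, hj⟩ := hij
    exact ⟨t, hj, hi⟩
end

section
/- A structural matrix algebra M(B,k) is semisimple if and only if the relation B is symmetric (i.e., (i,j) ∈ B implies (j,i) ∈ B). -/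
set_option synthInstance.maxHeartbeats 400000
set_option maxHeartbeats 1000000


section Aux

variable {k : Type*} [Field k] {n : ℕ} {B : Fin n → Fin n → Prop}
  (S : Subalgebra k (Matrix (Fin n) (Fin n) k))

/-- `colIdeal S j` : the left ideal of matrices in `S` supported on column `j`. -/
def colIdeal (j : Fin n) : Submodule S S where
  carrier := {A | ∀ i l, l ≠ j → (A : Matrix (Fin n) (Fin n) k) i l = 0}
  add_mem' := by
    intro A C hA hC i l hl
    simp [Matrix.add_apply, hA i l hl, hC i l hl]
  zero_mem' := by intro i l _; simp
  smul_mem' := by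
    intro r A hA i l hl
    have : ((r • A : S) : Matrix (Fin n) (Fin n) k) = (r : Matrix (Fin n) (Fin n) k) * A := by
      rw [smul_eq_mul]; rfl
    rw [this, Matrix.mul_apply]
    exact Finset.sum_eq_zero fun p _ => by rw [hA p l hl, mul_zero]

lemma mem_colIdeal {j : Fin n} {A : S} :
    A ∈ colIdeal S j ↔ ∀ i l, l ≠ j → (A : Matrix (Fin n) (Fin n) k) i l = 0 :=
  Iff.rfl

variable (hS : ∀ A : Matrix (Fin n) (Fin n) k, A ∈ S ↔ ∀ i j, ¬ B i j → A i j = 0)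
  (hrefl : ∀ i, B i i) (htrans : ∀ i j l, B i j → B j l → B i l)
  (hsymm : ∀ i j, B i j → B j i)

include hS hrefl htrans hsymm in
lemma colIdeal_isSimple (j : Fin n) : IsSimpleModule S (colIdeal S j) := by
  classical
  -- the element E_jj
  have hEmem : (Matrix.single j j (1 : k)) ∈ S := by
    rw [hS]
    intro a b hab
    show (if j = a ∧ j = b then (1:k) else 0) = 0
    rw [if_neg (by rintro ⟨rfl, rfl⟩; exact hab (hrefl j))]
  set E : S := ⟨_, hEmem⟩ with hE
  have hEcol : E ∈ colIdeal S j := by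
    intro a b hb
    show (if j = a ∧ j = b then (1:k) else 0) = 0
    rw [if_neg (by rintro ⟨rfl, rfl⟩; exact hb rfl)]
  have hEne : (⟨E, hEcol⟩ : colIdeal S j) ≠ 0 := by
    intro h
    have := congrArg (fun x : colIdeal S j => ((x : S) : Matrix (Fin n) (Fin n) k) j j) h
    simp [hE, Matrix.single] at this
  haveI : Nontrivial (colIdeal S j) := ⟨_, _, hEne⟩
  refine { eq_bot_or_eq_top := ?_ }
  intro N
  rcases eq_or_ne N ⊥ with h | h
  · exact Or.inl h
  · right
    obtain ⟨x, hxN, hx0⟩ := Submodule.exists_mem_ne_zero_of_ne_bot h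
    set Ax : Matrix (Fin n) (Fin n) k := ((x : S) : Matrix (Fin n) (Fin n) k) with hAx
    have hAxne : Ax ≠ 0 := by
      intro h0
      exact hx0 (Subtype.ext (Subtype.ext h0))
    obtain ⟨i0, l0, h0⟩ : ∃ i0 l0, Ax i0 l0 ≠ 0 := by
      by_contra hc
      push_neg at hc
      exact hAxne (by ext a b; simp [hc a b])
    have hl0 : l0 = j := by
      by_contra hne
      exact h0 (x.2 i0 l0 hne)
    have h0' : Ax i0 j ≠ 0 := by rwa [hl0] at h0
    have hBi0 : B i0 j := by
      by_contra hB
      exact h0' ((hS Ax).mp (x : S).2 i0 j hB)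
    rw [eq_top_iff]
    have hx2 : ∀ a b, b ≠ j → Ax a b = 0 := fun a b hb => x.2 a b hb
    rintro ⟨⟨Cy, hCyS⟩, hCycol⟩ -
    have hCycol' : ∀ a b, b ≠ j → Cy a b = 0 := hCycol
    -- build r with r * Ax = Cy
    set r : Matrix (Fin n) (Fin n) k :=
      Matrix.of fun a b => if b = i0 then Cy a j * (Ax i0 j)⁻¹ else 0 with hr
    have hrS : r ∈ S := by
      rw [hS]
      intro a b hab
      simp only [hr, Matrix.of_apply]
      split
      · rename_i hb
        subst hb
        have hCy : Cy a j = 0 := by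
          by_contra hC
          have hBaj : B a j := by
            by_contra hB
            exact hC ((hS Cy).mp hCyS a j hB)
          exact hab (htrans _ _ _ hBaj (hsymm _ _ hBi0))
        rw [hCy, zero_mul]
      · rfl
    have key : (⟨Cy, hCyS⟩ : S) = (⟨r, hrS⟩ : S) * (x : S) := by
      ext a b
      show Cy a b = (r * Ax) a b
      rw [Matrix.mul_apply]
      have hterm : ∀ p ∈ Finset.univ, r a p * Ax p b
          = if p = i0 then Cy a j * (Ax i0 j)⁻¹ * Ax i0 b else 0 := by
        intro p _
        simp only [hr, Matrix.of_apply]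
        split
        · rename_i hp; subst hp; rfl
        · rw [zero_mul]
      rw [Finset.sum_congr rfl hterm, Finset.sum_ite_eq' Finset.univ i0]
      simp only [Finset.mem_univ, if_true]
      rcases eq_or_ne b j with hbj | hb
      · rw [hbj, mul_assoc, inv_mul_cancel₀ h0', mul_one]
      · rw [hx2 i0 b hb, mul_zero]
        exact hCycol' a b hb
    have hfinal : (⟨⟨Cy, hCyS⟩, hCycol⟩ : colIdeal S j)
        = (⟨r, hrS⟩ : S) • x := by
      apply Subtype.ext
      show (⟨Cy, hCyS⟩ : S) = (⟨r, hrS⟩ : S) * (x : S)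
      exact key
    rw [hfinal]
    exact N.smul_mem _ hxN

include hS hrefl htrans hsymm in
lemma sma_semisimple : IsSemisimpleRing S := by
  classical
  apply IsSemisimpleModule.of_sSup_simples_eq_top
  rw [eq_top_iff]
  intro A _
  -- decompose A into its columns
  have hPmem : ∀ j : Fin n,
      (Matrix.of fun i l => if l = j then (A : Matrix (Fin n) (Fin n) k) i l else (0:k)) ∈ S := by
    intro j
    rw [hS]
    intro a b hab
    show (if b = j then (A : Matrix (Fin n) (Fin n) k) a b else 0) = 0
    split
    · exact (hS _).mp A.2 a b hab
    · rfl
  have hPcol : ∀ j : Fin n, (⟨_, hPmem j⟩ : S) ∈ colIdeal S j := by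
    intro j a b hb
    show (if b = j then (A : Matrix (Fin n) (Fin n) k) a b else 0) = 0
    rw [if_neg hb]
  have hsum : A = ∑ j : Fin n, (⟨_, hPmem j⟩ : S) := by
    apply Subtype.ext
    rw [AddSubmonoidClass.coe_finset_sum]
    ext a b
    rw [Matrix.sum_apply]
    have : ∀ j ∈ Finset.univ, (Matrix.of fun i l =>
        if l = j then (A : Matrix (Fin n) (Fin n) k) i l else (0:k)) a b
        = if b = j then (A : Matrix (Fin n) (Fin n) k) a b else 0 := fun j _ => rfl
    rw [Finset.sum_congr rfl this, Finset.sum_ite_eq Finset.univ b]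
    simp
  rw [hsum]
  refine Submodule.sum_mem _ fun j _ => ?_
  refine (le_sSup ?_ : colIdeal S j ≤ _) (hPcol j)
  exact colIdeal_isSimple S hS hrefl htrans hsymm j

omit hrefl htrans in
include hS in
lemma sma_symm_of_semisimple (h : IsSemisimpleRing S) : ∀ i j, B i j → B j i := by
  classical
  intro i j hij
  by_contra hji
  have hxmem : Matrix.single i j (1:k) ∈ S := by
    rw [hS]
    intro a b hab
    show (if i = a ∧ j = b then (1:k) else 0) = 0
    rw [if_neg (by rintro ⟨rfl, rfl⟩; exact hab hij)]
  set x : S := ⟨_, hxmem⟩ with hx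
  have hx0 : x ≠ 0 := by
    intro h0
    have := congrArg (fun y : S => (y : Matrix (Fin n) (Fin n) k) i j) h0
    simp [hx, Matrix.single] at this
  have hsand : ∀ a : S, x * a * x = 0 := by
    intro a
    apply Subtype.ext
    show Matrix.single i j 1 * (a : Matrix (Fin n) (Fin n) k)
        * Matrix.single i j 1 = 0
    have hji0 : (a : Matrix (Fin n) (Fin n) k) j i = 0 := (hS _).mp a.2 j i hji
    ext p q
    rcases eq_or_ne q j with rfl | hq
    · rw [Matrix.mul_single_apply_same, Matrix.zero_apply]
      rcases eq_or_ne p i with rfl | hp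
      · rw [Matrix.single_mul_apply_same]
        simp [hji0]
      · rw [Matrix.single_mul_apply_of_ne _ _ _ _ _ hp, zero_mul]
    · rw [Matrix.mul_single_apply_of_ne _ _ _ _ _ hq, Matrix.zero_apply]
  obtain ⟨e, he, hIe⟩ := IsSemisimpleRing.ideal_eq_span_idempotent (Ideal.span ({x} : Set S))
  have hex : e ∈ Ideal.span ({x} : Set S) := hIe ▸ Submodule.mem_span_singleton_self e
  obtain ⟨r, hr⟩ := Submodule.mem_span_singleton.mp hex
  rw [smul_eq_mul] at hr
  have he0 : e = 0 := by
    have h2 : e * e = 0 := by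
      rw [← hr, mul_assoc r x (r * x), ← mul_assoc x r x, hsand r, mul_zero]
    rwa [he.eq] at h2
  have hxI : x ∈ Ideal.span ({x} : Set S) := Submodule.mem_span_singleton_self x
  rw [hIe, he0] at hxI
  rw [show Ideal.span ({(0:S)} : Set S) = (⊥ : Ideal S) from Submodule.span_zero_singleton S,
    Submodule.mem_bot] at hxI
  exact hx0 hxI

end Aux


/-- `M(B, k)` is semisimple if and only if `B` is symmetric. -/
theorem statement4 (k : Type*) [Field k] {n : ℕ} (B : Fin n → Fin n → Prop)
    (hrefl : ∀ i, B i i) (htrans : ∀ i j l, B i j → B j l → B i l) :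
    IsSemisimpleRing (structuralMatrixAlgebra k B hrefl htrans) ↔
      ∀ i j, B i j → B j i := by
  constructor
  · exact fun h => sma_symm_of_semisimple (structuralMatrixAlgebra k B hrefl htrans)
      (fun A => Iff.rfl) h
  · exact fun hsymm => sma_semisimple (structuralMatrixAlgebra k B hrefl htrans)
      (fun A => Iff.rfl) hrefl htrans hsymm
end

section
/- If a structural matrix algebra M(B,k) is a Frobenius algebra, then it is semisimple. -/
set_option maxHeartbeats 1000000 in
set_option synthInstance.maxHeartbeats 400000 in
theorem aux_sym (k : Type*) [Field k] {n : ℕ} (B : Fin n → Fin n → Prop)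
    (hrefl : ∀ i, B i i) (htrans : ∀ i j l, B i j → B j l → B i l)
    (hsym : ∀ i j, B i j → B j i) :
    IsSemisimpleRing (structuralMatrixAlgebra k B hrefl htrans) := by
  classical
  set A := structuralMatrixAlgebra k B hrefl htrans with hA
  have memA : ∀ x : Matrix (Fin n) (Fin n) k, x ∈ A ↔ ∀ i j, ¬ B i j → x i j = 0 :=
    fun x => Iff.rfl
  -- elementary matrices
  let E : Fin n → Fin n → Matrix (Fin n) (Fin n) k :=
    fun i j => fun p q => if p = i ∧ q = j then 1 else 0
  have hEmem : ∀ i j, B i j → E i j ∈ A := by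
    intro i j hij p q hpq
    simp only [E, ite_eq_right_iff, one_ne_zero]
    rintro ⟨rfl, rfl⟩
    exact hpq hij
  have hmulE : ∀ (x : Matrix (Fin n) (Fin n) k) (i j p q : Fin n),
      (x * E i j) p q = if q = j then x p i else 0 := by
    intro x i j p q
    rw [Matrix.mul_apply]
    simp only [E]
    rw [Finset.sum_eq_single i]
    · by_cases h : q = j <;> simp [h]
    · intro l _ hl
      simp [hl]
    · simp
  have hEmul : ∀ (i j : Fin n) (x : Matrix (Fin n) (Fin n) k) (p q : Fin n),
      (E i j * x) p q = if p = i then x j q else 0 := by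
    intro i j x p q
    rw [Matrix.mul_apply]
    simp only [E]
    rw [Finset.sum_eq_single j]
    · by_cases h : p = i <;> simp [h]
    · intro l _ hl
      simp [hl]
    · simp
  -- the column left ideals
  let C : Fin n → Submodule A A := fun j =>
    { carrier := {a : A | ∀ p q, q ≠ j → (a : Matrix (Fin n) (Fin n) k) p q = 0}
      add_mem' := by
        intro a b ha hb p q hq
        show ((a : Matrix (Fin n) (Fin n) k) + b) p q = 0
        simp [Matrix.add_apply, ha p q hq, hb p q hq]
      zero_mem' := by
        intro p q hq
        simp
      smul_mem' := by
        intro x a ha p q hq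
        show ((x : Matrix (Fin n) (Fin n) k) * a) p q = 0
        rw [Matrix.mul_apply]
        exact Finset.sum_eq_zero fun l _ => by rw [ha l q hq, mul_zero] }
  have hCmem : ∀ (j : Fin n) (a : A), a ∈ C j ↔
      ∀ p q, q ≠ j → (a : Matrix (Fin n) (Fin n) k) p q = 0 := fun j a => Iff.rfl
  let e : ∀ i j, B i j → A := fun i j h => ⟨E i j, hEmem i j h⟩
  have hejj : ∀ j, (e j j (hrefl j)) ∈ C j := by
    intro j p q hq
    show E j j p q = 0
    simp only [E, ite_eq_right_iff, one_ne_zero]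
    rintro ⟨rfl, rfl⟩; exact hq rfl
  -- each C j is an atom
  have hatom : ∀ j, IsAtom (C j) := by
    intro j
    constructor
    · intro hbot
      have : (e j j (hrefl j)) ∈ (⊥ : Submodule A A) := hbot ▸ hejj j
      rw [Submodule.mem_bot] at this
      have := congrArg (fun x : A => (x : Matrix (Fin n) (Fin n) k) j j) this
      simp [e, E] at this
    · intro N hN
      by_contra hNbot
      rcases Submodule.exists_mem_ne_zero_of_ne_bot hNbot with ⟨c, hcN, hc0⟩
      have hcC : c ∈ C j := hN.le hcN
      -- find nonzero entry, necessarily in column j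
      have : ∃ p, (c : Matrix (Fin n) (Fin n) k) p j ≠ 0 := by
        by_contra hall
        push_neg at hall
        apply hc0
        apply Subtype.ext
        funext p q
        by_cases hq : q = j
        · subst hq; simp [hall p]
        · simp [hcC p q hq]
      rcases this with ⟨p, hp⟩
      have hBpj : B p j := by
        by_contra hB
        exact hp (c.2 p j hB)
      have hBjp : B j p := hsym _ _ hBpj
      -- e j j  =  (c p j)⁻¹ • (e j p) * c  ∈ N
      have hmem : (e j j (hrefl j)) ∈ N := by
        have key : (((c : Matrix (Fin n) (Fin n) k) p j)⁻¹ • (e j p hBjp)) * c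
            = e j j (hrefl j) := by
          apply Subtype.ext
          rw [MulMemClass.coe_mul, SetLike.val_smul, smul_mul_assoc]
          show ((c : Matrix (Fin n) (Fin n) k) p j)⁻¹ • (E j p * (c : Matrix (Fin n) (Fin n) k))
              = E j j
          funext x y
          rw [Matrix.smul_apply, hEmul]
          by_cases hx : x = j
          · by_cases hy : y = j
            · rw [if_pos hx, hy]
              simp [E, hx, hy, inv_mul_cancel₀ hp]
            · rw [if_pos hx, hcC p y hy]
              simp [E, hy]
          · rw [if_neg hx]
            simp [E, hx]
        have : (((c : Matrix (Fin n) (Fin n) k) p j)⁻¹ • (e j p hBjp)) • c ∈ N :=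
          N.smul_mem _ hcN
        rwa [smul_eq_mul, key] at this
      -- now C j ≤ N, contradiction with hN
      have hle : C j ≤ N := by
        intro a haC
        have : a • (e j j (hrefl j)) ∈ N := N.smul_mem _ hmem
        have haeq : a • (e j j (hrefl j)) = a := by
          rw [smul_eq_mul]
          apply Subtype.ext
          show (a : Matrix (Fin n) (Fin n) k) * E j j = (a : Matrix (Fin n) (Fin n) k)
          funext pp qq
          rw [hmulE]
          by_cases hq : qq = j
          · subst hq; simp
          · simp [hq, haC pp qq hq]
        rwa [haeq] at this
      exact hN.ne (le_antisymm hN.le hle)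
  -- conclude
  show IsSemisimpleModule A A
  apply IsSemisimpleModule.of_sSup_simples_eq_top
  rw [eq_top_iff]
  intro a _
  have hone : (1 : A) = ∑ j, e j j (hrefl j) := by
    apply Subtype.ext
    rw [AddSubmonoidClass.coe_finset_sum]
    show (1 : Matrix (Fin n) (Fin n) k) = ∑ j, E j j
    funext p q
    rw [Matrix.sum_apply]
    by_cases h : p = q
    · subst h
      rw [Finset.sum_eq_single p]
      · simp [E, Matrix.one_apply]
      · intro l _ hl; simp [E, Ne.symm hl]
      · simp
    · rw [Matrix.one_apply_ne h]
      symm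
      exact Finset.sum_eq_zero fun l _ => by
        simp only [E, ite_eq_right_iff, one_ne_zero]
        rintro ⟨rfl, rfl⟩; exact h rfl
  have ha : a = ∑ j, a • (e j j (hrefl j)) := by
    rw [← Finset.smul_sum, ← hone, smul_eq_mul, mul_one]
  rw [ha]
  refine Submodule.sum_mem _ fun j _ => ?_
  have hCin : C j ∈ {m : Submodule A A | IsSimpleModule A m} := by
    show IsSimpleModule A (C j)
    rw [isSimpleModule_iff_isAtom]
    exact hatom j
  refine Submodule.mem_sSup_of_mem hCin ?_
  intro p q hq
  show ((a : Matrix (Fin n) (Fin n) k) * E j j) p q = 0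
  rw [hmulE, if_neg hq]

set_option maxHeartbeats 1000000 in
set_option synthInstance.maxHeartbeats 400000 in
theorem aux_nonsym (k : Type*) [Field k] {n : ℕ} (B : Fin n → Fin n → Prop)
    (hrefl : ∀ i, B i i) (htrans : ∀ i j l, B i j → B j l → B i l)
    (hns : ¬ ∀ i j, B i j → B j i) :
    ¬ IsFrobeniusAlgebra k (structuralMatrixAlgebra k B hrefl htrans) := by
  classical
  set A := structuralMatrixAlgebra k B hrefl htrans with hA
  -- Step 1: find j which is the target of a strict pair but whose class is maximal
  obtain ⟨j, hjbad, hjmax⟩ :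
      ∃ j : Fin n, (∃ i, B i j ∧ ¬ B j i) ∧ ∀ l : Fin n, B j l → B l j := by
    push_neg at hns
    obtain ⟨i0, j0, hB0, hnB0⟩ := hns
    set bad : Finset (Fin n) := Finset.univ.filter (fun j => ∃ i, B i j ∧ ¬ B j i) with hbad
    have hne : bad.Nonempty := ⟨j0, by simp [hbad]; exact ⟨i0, hB0, hnB0⟩⟩
    obtain ⟨j, hj, hjmax⟩ := Finset.exists_max_image bad
      (fun j => (Finset.univ.filter (fun p => B p j)).card) hne
    refine ⟨j, by simpa [hbad] using hj, ?_⟩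
    intro l hl
    by_contra hnl
    have hlbad : l ∈ bad := by simp [hbad]; exact ⟨j, hl, hnl⟩
    have hsub : (Finset.univ.filter (fun p => B p j)) ⊂ (Finset.univ.filter (fun p => B p l)) := by
      rw [Finset.ssubset_iff_of_subset]
      · exact ⟨l, by simp [hrefl l], by simp [hnl]⟩
      · intro p hp
        simp only [Finset.mem_filter, Finset.mem_univ, true_and] at hp ⊢
        exact htrans p j l hp hl
    have := Finset.card_lt_card hsub
    have := hjmax l hlbad
    omega
  obtain ⟨i₀, hi₀, hni₀⟩ := hjbad
  rintro ⟨l, hl, -⟩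
  -- Step 2: cardinalities
  have hcard : Fintype.card {q : Fin n // B j q} < Fintype.card {i : Fin n // B i j} := by
    refine Fintype.card_lt_of_injective_of_notMem
      (fun q => ⟨q.1, hjmax q.1 q.2⟩) ?_ (b := ⟨i₀, hi₀⟩) ?_
    · intro q q' h
      simp only [Subtype.mk.injEq] at h
      exact Subtype.ext h
    · rintro ⟨q, hq⟩
      have : q.1 = i₀ := congrArg Subtype.val hq
      exact hni₀ (this ▸ q.2)
  -- elementary matrices
  let E : Fin n → Fin n → Matrix (Fin n) (Fin n) k :=
    fun i q => fun p q' => if p = i ∧ q' = q then 1 else 0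
  have hEmem : ∀ i q, B i q → E i q ∈ A := by
    intro i q hiq p q' hpq
    simp only [E, ite_eq_right_iff, one_ne_zero]
    rintro ⟨rfl, rfl⟩
    exact hpq hiq
  let eA : {i : Fin n // B i j} → {q : Fin n // B j q} → A :=
    fun i q => ⟨E i.1 q.1, hEmem i.1 q.1 (htrans _ _ _ i.2 q.2)⟩
  -- Step 3: the matrix of the functional and a kernel vector
  let M : Matrix {q : Fin n // B j q} {i : Fin n // B i j} k := fun q i => l (eA i q)
  have hninj : ¬ Function.Injective M.mulVecLin := by
    intro hinj
    have h1 := LinearMap.finrank_le_finrank_of_injective hinj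
    rw [Module.finrank_pi, Module.finrank_pi] at h1
    omega
  rw [← LinearMap.ker_eq_bot] at hninj
  obtain ⟨v₀, hv₀ker, hv₀ne⟩ := Submodule.exists_mem_ne_zero_of_ne_bot hninj
  rw [LinearMap.mem_ker] at hv₀ker
  have hker : ∀ q : {q : Fin n // B j q}, ∑ i, M q i * v₀ i = 0 := by
    intro q
    have := congrFun hv₀ker q
    simpa [Matrix.mulVecLin_apply, Matrix.mulVec, dotProduct] using this
  -- Step 4: the element a
  let v : Fin n → k := fun i => if h : B i j then v₀ ⟨i, h⟩ else 0
  have hvmem : ∀ (q : Fin n), B j q →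
      (fun p q' => if q' = q then v p else 0) ∈ A := by
    intro q hjq p q' hpq'
    dsimp only
    split
    · next h =>
      subst h
      by_cases hpj : B p j
      · exact absurd (htrans p j q' hpj hjq) hpq'
      · exact dif_neg hpj
    · rfl
  let aq : {q : Fin n // B j q} → A := fun q => ⟨_, hvmem q.1 q.2⟩
  let a : A := aq ⟨j, hrefl j⟩
  -- a ≠ 0
  have hvv : ∀ (i : {i : Fin n // B i j}), v i.1 = v₀ i := by
    intro i
    show (if h : B i.1 j then v₀ ⟨i.1, h⟩ else 0) = v₀ i
    rw [dif_pos i.2]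
  have hane : a ≠ 0 := by
    obtain ⟨i₁, hi₁⟩ := Function.ne_iff.mp hv₀ne
    intro h0
    apply hi₁
    have h2 : (a : Matrix (Fin n) (Fin n) k) i₁.1 j
        = ((0 : A) : Matrix (Fin n) (Fin n) k) i₁.1 j := by rw [h0]
    rw [ZeroMemClass.coe_zero, Matrix.zero_apply] at h2
    have h5 : (a : Matrix (Fin n) (Fin n) k) i₁.1 j = v i₁.1 := by
      show (if j = j then v i₁.1 else 0) = v i₁.1
      rw [if_pos rfl]
    show v₀ i₁ = (0 : {i : Fin n // B i j} → k) i₁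
    rw [Pi.zero_apply, ← hvv i₁, ← h5, h2]
  -- each aq q is in the kernel of l
  have hlaq : ∀ q : {q : Fin n // B j q}, l (aq q) = 0 := by
    intro q
    have heapp : ∀ (i : {i : Fin n // B i j}) (x : k) (p q' : Fin n),
        ((x • eA i q : A) : Matrix (Fin n) (Fin n) k) p q'
          = x * (if p = i.1 ∧ q' = q.1 then 1 else 0) := by
      intro i x p q'
      rw [SetLike.val_smul, Matrix.smul_apply, smul_eq_mul]
    have hdecomp : aq q = ∑ i : {i : Fin n // B i j}, v₀ i • eA i q := by
      apply Subtype.ext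
      rw [AddSubmonoidClass.coe_finset_sum]
      funext p q'
      rw [Matrix.sum_apply]
      simp only [heapp, mul_ite, mul_one, mul_zero]
      show (if q' = q.1 then v p else 0) = _
      by_cases hq' : q' = q.1
      · simp only [hq', and_true, if_pos rfl]
        by_cases hpj : B p j
        · rw [Finset.sum_eq_single (⟨p, hpj⟩ : {i : Fin n // B i j})]
          · rw [if_pos rfl]
            exact hvv ⟨p, hpj⟩
          · intro i _ hip
            rw [if_neg]
            intro h
            exact hip (Subtype.ext h.symm)
          · simp
        · rw [show v p = 0 from dif_neg hpj]
          symm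
          refine Finset.sum_eq_zero fun i _ => ?_
          rw [if_neg]
          intro h
          exact hpj (h ▸ i.2)
      · simp [hq']
    rw [hdecomp, map_sum]
    have := hker q
    rw [← this]
    refine Finset.sum_congr rfl fun i _ => ?_
    rw [map_smul, smul_eq_mul, mul_comm]
  -- ∀ b, l (a * b) = 0
  have hab : ∀ b : A, l (a * b) = 0 := by
    intro b
    have hdecomp : a * b = ∑ q : {q : Fin n // B j q},
        ((b : Matrix (Fin n) (Fin n) k) j q.1) • aq q := by
      apply Subtype.ext
      rw [MulMemClass.coe_mul, AddSubmonoidClass.coe_finset_sum]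
      funext p q''
      rw [Matrix.mul_apply, Matrix.sum_apply]
      have hLHS : ∑ l', (a : Matrix (Fin n) (Fin n) k) p l' * (b : Matrix (Fin n) (Fin n) k) l' q''
          = v p * (b : Matrix (Fin n) (Fin n) k) j q'' := by
        rw [Finset.sum_eq_single j]
        · show (if (j : Fin n) = j then v p else 0) * _ = _
          rw [if_pos rfl]
        · intro l' _ hl'
          show (if l' = j then v p else 0) * _ = 0
          rw [if_neg hl', zero_mul]
        · simp
      rw [hLHS]
      have haqapp : ∀ (q : {q : Fin n // B j q}) (x : k),
          ((x • aq q : A) : Matrix (Fin n) (Fin n) k) p q''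
            = x * (if q'' = q.1 then v p else 0) := by
        intro q x
        rw [SetLike.val_smul, Matrix.smul_apply, smul_eq_mul]
      simp only [haqapp, mul_ite, mul_zero]
      by_cases hq'' : B j q''
      · rw [Finset.sum_eq_single (⟨q'', hq''⟩ : {q : Fin n // B j q})]
        · rw [if_pos rfl, mul_comm]
        · intro q _ hq
          rw [if_neg]
          intro h
          exact hq (Subtype.ext h.symm)
        · simp
      · rw [b.2 j q'' hq'', mul_zero]
        symm
        refine Finset.sum_eq_zero fun q _ => ?_
        rw [if_neg]
        intro h
        exact hq'' (h ▸ q.2)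
    rw [hdecomp, map_sum]
    refine Finset.sum_eq_zero fun q _ => ?_
    rw [map_smul, hlaq q, smul_zero]
  exact hane (hl a hab)

/-- If the structural matrix algebra `M(B, k)` is a Frobenius algebra,
then it is semisimple. -/
theorem statement5 (k : Type*) [Field k] {n : ℕ} (B : Fin n → Fin n → Prop)
    (hrefl : ∀ i, B i i) (htrans : ∀ i j l, B i j → B j l → B i l)
    (hFrob : IsFrobeniusAlgebra k (structuralMatrixAlgebra k B hrefl htrans)) :
    IsSemisimpleRing (structuralMatrixAlgebra k B hrefl htrans) := by
  by_cases hsym : ∀ i j, B i j → B j i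
  · exact aux_sym k B hrefl htrans hsym
  · exact absurd hFrob (aux_nonsym k B hrefl htrans hsym)
end

section
/- Let C = IC(X) with X locally finite preordered, ~ the associated equivalence, and x ∈ X with finite equivalence class. The subspace S_x spanned by {e_{x,y} : y ~ x} is a simple left C*-module (equivalently, a simple right C-comodule) under the action c* → e_{x,y} = Σ_{x ≤ z ≤ y} c*(e_{z,y}) e_{x,z}. -/
open TensorProduct

/-- The underlying vector space of the incidence coalgebra `IC(X)`:
functions with finite support on the set of pairs `(x, y)` with `x ≤ y`. -/
abbrev IC (k X : Type*) [Field k] [Preorder X] : Type _ :=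
  {p : X × X // p.1 ≤ p.2} →₀ k

/-- The basis element `e_{x,y}` of the incidence coalgebra. -/
noncomputable def e (k : Type*) {X : Type*} [Field k] [Preorder X] (x y : X) (h : x ≤ y) :
    IC k X :=
  Finsupp.single ⟨(x, y), h⟩ 1

/-- The comultiplication `Δ(e_{x,y}) = Σ_{x ≤ z ≤ y} e_{x,z} ⊗ e_{z,y}`. -/
noncomputable def Δ (k : Type*) {X : Type*} [Field k] [Preorder X] [LocallyFiniteOrder X] :
    IC k X →ₗ[k] IC k X ⊗[k] IC k X :=
  Finsupp.lsum k fun p => LinearMap.toSpanSingleton k _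
    (∑ z ∈ (Finset.Icc p.1.1 p.1.2).attach,
      e k p.1.1 z.1 (Finset.mem_Icc.mp z.2).1 ⊗ₜ[k] e k z.1 p.1.2 (Finset.mem_Icc.mp z.2).2)

open Classical in
/-- The counit `ε(e_{x,y}) = δ_{x,y}`. -/
noncomputable def ε (k : Type*) {X : Type*} [Field k] [Preorder X] : IC k X →ₗ[k] k :=
  Finsupp.lsum k fun p => LinearMap.toSpanSingleton k k (if p.1.1 = p.1.2 then 1 else 0)

/-- The left action of `C* = Module.Dual k (IC k X)` on `C = IC k X` induced by the right
comodule structure: `c* → c = Σ c*(c₂) c₁`. -/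
noncomputable def act (k : Type*) {X : Type*} [Field k] [Preorder X] [LocallyFiniteOrder X]
    (f : Module.Dual k (IC k X)) : IC k X →ₗ[k] IC k X :=
  (TensorProduct.rid k (IC k X)).toLinearMap ∘ₗ TensorProduct.map LinearMap.id f ∘ₗ Δ k

/-- The right action of `C*` on `C`: `c ← c* = Σ c*(c₁) c₂`. -/
noncomputable def actR (k : Type*) {X : Type*} [Field k] [Preorder X] [LocallyFiniteOrder X]
    (f : Module.Dual k (IC k X)) : IC k X →ₗ[k] IC k X :=
  (TensorProduct.lid k (IC k X)).toLinearMap ∘ₗ TensorProduct.map f LinearMap.id ∘ₗ Δ k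

/-- The dual basis functional `p_{x,y}`. -/
noncomputable def pfun (k : Type*) {X : Type*} [Field k] [Preorder X] (x y : X) (h : x ≤ y) :
    Module.Dual k (IC k X) :=
  Finsupp.lapply ⟨(x, y), h⟩

/-- `S_x`: the span of `{e_{x,y} : y ~ x}`, where `x ~ y ↔ x ≤ y ∧ y ≤ x`. -/
noncomputable def Ssub (k : Type*) {X : Type*} [Field k] [Preorder X] (x : X) :
    Submodule k (IC k X) :=
  Submodule.span k {c | ∃ (y : X) (h : x ≤ y), y ≤ x ∧ c = e k x y h}

section Aux13
variable {k X : Type*} [Field k] [Preorder X] [LocallyFiniteOrder X]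

lemma act_e (f : Module.Dual k (IC k X)) (x y : X) (h : x ≤ y) :
    act k f (e k x y h) =
      ∑ z ∈ (Finset.Icc x y).attach,
        f (e k z.1 y (Finset.mem_Icc.mp z.2).2) • e k x z.1 (Finset.mem_Icc.mp z.2).1 := by
  simp only [act, LinearMap.comp_apply, e, Δ, Finsupp.lsum_single,
    LinearMap.toSpanSingleton_apply, one_smul, map_sum, TensorProduct.map_tmul,
    LinearMap.id_apply, LinearEquiv.coe_coe, TensorProduct.rid_tmul]

open Classical in
lemma pfun_e (w v a b : X) (hwv : w ≤ v) (hab : a ≤ b) :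
    pfun k w v hwv (e k a b hab) = if a = w ∧ b = v then 1 else 0 := by
  classical
  simp [pfun, e, Finsupp.lapply_apply, Finsupp.single_apply, Subtype.ext_iff, Prod.ext_iff]

set_option linter.unusedSectionVars false

lemma act_pfun_e_eq (x y w : X) (hxy : x ≤ y) (hxw : x ≤ w) (hwy : w ≤ y) :
    act k (pfun k w y hwy) (e k x y hxy) = e k x w hxw := by
  rw [act_e]
  rw [Finset.sum_eq_single_of_mem (⟨w, Finset.mem_Icc.mpr ⟨hxw, hwy⟩⟩ : {z // z ∈ Finset.Icc x y})
    (Finset.mem_attach _ _)]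
  · rw [pfun_e]; simp
  · intro z _ hz
    rw [pfun_e]
    have : ¬ (z.1 = w ∧ y = y) := by
      rintro ⟨h1, -⟩
      exact hz (Subtype.ext h1)
    rw [if_neg this, zero_smul]

lemma act_pfun_e_ne (x y w v : X) (hxy : x ≤ y) (hwv : w ≤ v) (hne : v ≠ y) :
    act k (pfun k w v hwv) (e k x y hxy) = 0 := by
  rw [act_e]
  apply Finset.sum_eq_zero
  intro z _
  rw [pfun_e, if_neg (by rintro ⟨-, h⟩; exact hne h.symm), zero_smul]

lemma act_pfun_span (x w y : X) (hxw : x ≤ w) (hwx : w ≤ x) (hxy : x ≤ y) (hyx : y ≤ x)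
    {c : IC k X} (hc : c ∈ Ssub k x) :
    act k (pfun k w y (hwx.trans hxy)) c = c ⟨(x, y), hxy⟩ • e k x w hxw := by
  induction hc using Submodule.span_induction with
  | mem c hcmem =>
    obtain ⟨y', h', hy'x, rfl⟩ := hcmem
    by_cases hyy : y' = y
    · subst hyy
      rw [act_pfun_e_eq x y' w h' hxw (hwx.trans h')]
      have : (e k x y' h') ⟨(x, y'), hxy⟩ = 1 := by
        simp [e, Finsupp.single_apply]
      rw [this, one_smul]
    · rw [act_pfun_e_ne x y' w y h' _ (fun h => hyy h.symm)]
      have : (e k x y' h') ⟨(x, y), hxy⟩ = 0 := by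
        classical
        simp only [e, Finsupp.single_apply]
        rw [if_neg]
        intro h
        exact hyy (congrArg (fun p => p.1.2) h)
      rw [this, zero_smul]
  | zero => simp
  | add a b _ _ ha hb => rw [map_add, ha, hb, Finsupp.add_apply, add_smul]
  | smul r a _ ha => rw [map_smul, ha, Finsupp.smul_apply, smul_eq_mul, mul_smul]

lemma ssub_eq_supported (x : X) :
    Ssub k x = Finsupp.supported k k {p : {p : X × X // p.1 ≤ p.2} | p.1.1 = x ∧ p.1.2 ≤ x} := by
  rw [Finsupp.supported_eq_span_single, Ssub]
  congr 1
  ext c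
  constructor
  · rintro ⟨y, h, hyx, rfl⟩
    exact ⟨⟨(x, y), h⟩, ⟨rfl, hyx⟩, rfl⟩
  · rintro ⟨p, ⟨h1, h2⟩, rfl⟩
    refine ⟨p.1.2, h1 ▸ p.2, h2, ?_⟩
    rw [e]
    congr 1
    exact Subtype.ext (Prod.ext h1 rfl)

end Aux13

/-- `S_x` is a simple left `C*`-module under the action
`c* → e_{x,y} = Σ_{x ≤ z ≤ y} c*(e_{z,y}) e_{x,z}`: it is nonzero, stable under the
action, and has no nonzero proper stable submodules. (The equivalence class of `x` is
finite, automatically, by local finiteness.) -/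
theorem statement13 (k X : Type*) [Field k] [Preorder X] [LocallyFiniteOrder X]
    (x : X) (hfin : {y : X | x ≤ y ∧ y ≤ x}.Finite) :
    Ssub k x ≠ ⊥ ∧
    (∀ (f : Module.Dual k (IC k X)), ∀ c ∈ Ssub k (X := X) x, act k f c ∈ Ssub k x) ∧
    (∀ N : Submodule k (IC k X), N ≤ Ssub k x →
      (∀ (f : Module.Dual k (IC k X)), ∀ c ∈ N, act k f c ∈ N) →
      N = ⊥ ∨ N = Ssub k x) := by
  classical
  refine ⟨?_, ?_, ?_⟩
  · intro hbot
    have h1 : e k x x le_rfl ∈ Ssub k x := Submodule.subset_span ⟨x, le_rfl, le_rfl, rfl⟩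
    rw [hbot, Submodule.mem_bot] at h1
    exact one_ne_zero (Finsupp.single_eq_zero.mp h1)
  · intro f c hc
    induction hc using Submodule.span_induction with
    | mem c hcmem =>
      obtain ⟨y, h, hyx, rfl⟩ := hcmem
      rw [act_e]
      apply Submodule.sum_mem
      intro z _
      exact Submodule.smul_mem _ _ (Submodule.subset_span
        ⟨z.1, (Finset.mem_Icc.mp z.2).1, (Finset.mem_Icc.mp z.2).2.trans hyx, rfl⟩)
    | zero => simp
    | add a b _ _ ha hb => rw [map_add]; exact Submodule.add_mem _ ha hb
    | smul r a _ ha => rw [map_smul]; exact Submodule.smul_mem _ r ha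
  · intro N hNle hNstab
    by_cases hN : N = ⊥
    · exact Or.inl hN
    right
    obtain ⟨c, hcN, hc0⟩ := (Submodule.ne_bot_iff N).mp hN
    have hcS : c ∈ Ssub k x := hNle hcN
    obtain ⟨a, ha⟩ := Finsupp.support_nonempty_iff.mpr hc0
    have hsupp : a.1.1 = x ∧ a.1.2 ≤ x := by
      have h := (Finsupp.mem_supported k c).mp (by rwa [ssub_eq_supported] at hcS)
      exact h ha
    obtain ⟨h1, h2⟩ := hsupp
    have hxy : x ≤ a.1.2 := h1 ▸ a.2
    have haeq : a = ⟨(x, a.1.2), hxy⟩ := Subtype.ext (Prod.ext h1 rfl)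
    have hca : c ⟨(x, a.1.2), hxy⟩ ≠ 0 := by rw [← haeq]; exact Finsupp.mem_support_iff.mp ha
    apply le_antisymm hNle
    rw [Ssub, Submodule.span_le]
    rintro _ ⟨w, hxw, hwx, rfl⟩
    have hmem : act k (pfun k w a.1.2 (hwx.trans hxy)) c ∈ N := hNstab _ c hcN
    rw [act_pfun_span x w a.1.2 hxw hwx hxy h2 hcS] at hmem
    have h3 := N.smul_mem (c ⟨(x, a.1.2), hxy⟩)⁻¹ hmem
    rwa [smul_smul, inv_mul_cancel₀ hca, one_smul] at h3
end
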